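/- Let z₀, z_k, z_{k+1} be points in the unit disc forming a triangle whose angle at z_{k+1} lies in [ε, π − ε], and let γ_h be the hyperbolic geodesic through z₀ and z_k in the Poincaré disc, realized as a circle with Euclidean center z_* and radius R orthogonal to the unit circle. If the central angle ∠z₀ z_* z_k < 2ε, then ∠z₀ z_{k+1} z_k > (1/2)∠z₀ z_* z_k and ∠z₀ z_{k+1} z_k < π − (1/2)∠z₀ z_* z_k, and consequently z_{k+1} lies on the side of γ_h not containing the 'inside' arc, i.e., z_{k+1} lies in the hyperbolic half-plane P_h = {z : arg((exp⁻¹_{z₀} z)/(exp⁻¹_{z₀} z_k)) ∈ (0, π)} whenever it lies in the Euclidean half-plane P = {z : arg((z − z₀)/(z_k − z₀)) ∈ (0, π)}. -/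

import Mathlib

open Real EuclideanGeometry

/-- The direction (and, up to the positive scaling by hyperbolic distance, the
value) of the inverse exponential map `exp⁻¹_{z₀}(z)` of the Poincaré disc at
`z₀`, with `T_{z₀}𝔻` identified with `ℂ`: `exp⁻¹_{z₀}(z)` is a positive
multiple of `v = (z − z₀)/(1 − conj z₀ · z)`, hence has the same argument. -/
noncomputable def expInvDir (z0 z : ℂ) : ℂ :=
  (z - z0) / (1 - (starRingEnd ℂ) z0 * z)

private lemma arg_mem_Ioo_iff (z : ℂ) : Complex.arg z ∈ Set.Ioo 0 π ↔ 0 < z.im := by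
  constructor
  · rintro ⟨h1, h2⟩
    rcases eq_or_ne z 0 with rfl | hz
    · simp [Complex.arg_zero] at h1
    · have hs : 0 < Real.sin (Complex.arg z) := Real.sin_pos_of_pos_of_lt_pi h1 h2
      rw [Complex.sin_arg] at hs
      have habs : 0 < ‖z‖ := norm_pos_iff.mpr hz
      rcases div_pos_iff.mp hs with ⟨h, _⟩ | ⟨_, h⟩
      · exact h
      · linarith
  · intro h
    have hz : z ≠ 0 := fun h0 => by simp [h0] at h
    have hs : 0 < Real.sin (Complex.arg z) := by
      rw [Complex.sin_arg]; exact div_pos h (norm_pos_iff.mpr hz)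
    constructor
    · by_contra hle
      push_neg at hle
      have : Real.sin (Complex.arg z) ≤ 0 :=
        Real.sin_nonpos_of_nonpos_of_neg_pi_le hle (Complex.neg_pi_lt_arg z).le
      linarith
    · rcases lt_or_eq_of_le (Complex.arg_le_pi z) with h' | h'
      · exact h'
      · rw [h', Real.sin_pi] at hs; linarith

private lemma unit_disc_inner (a0 b0 ak bk : ℝ) (hd0 : a0^2 + b0^2 < 1)
    (hdk : ak^2 + bk^2 < 1) : 0 < 1 - a0*ak - b0*bk := by
  nlinarith [sq_nonneg (a0-ak), sq_nonneg (b0-bk)]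

private lemma abs_im_pos_ne_left (z0 zk zk1 : ℂ)
    (hmR : 0 < (zk1.im - z0.im)*(zk.re - z0.re) - (zk1.re - z0.re)*(zk.im - z0.im)) :
    zk1 ≠ z0 ∧ zk1 ≠ zk := by
  constructor
  · intro h
    rw [h] at hmR
    have hz : (z0.im - z0.im)*(zk.re - z0.re) - (z0.re - z0.re)*(zk.im - z0.im) = 0 := by ring
    linarith
  · intro h
    rw [h] at hmR
    have hz : (zk.im - z0.im)*(zk.re - z0.re) - (zk.re - z0.re)*(zk.im - z0.im) = 0 := by ring
    linarith

set_option maxHeartbeats 1000000 in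
/-- Abstract inequality reasoning. -/
private lemma stmt9Aux (R l2 d m mst Pw g u k t2 w : ℝ) (hR : 0 < R) (hm : 0 < m)
    (hu : 0 < u) (hk : 0 < k)
    (hang'' : d^2 * (2*(R*R)) < (2*R^2 - l2/2)*(d^2 + m^2))
    (hcs : t2*l2 = m^2 + w^2) (ht2 : 0 ≤ t2)
    (hmst2 : 4*mst^2 = l2*(4*R^2 - l2))
    (f1 : l2*Pw = l2*d - 2*m*mst)
    (f8 : g*mst = -(l2*k)/2) :
    0 < (u*g)*Pw ∧ g ≠ 0 := by
  have hl2pos : 0 < l2 := by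
    by_contra hc
    push_neg at hc
    have h6 : t2*l2 ≤ 0 := mul_nonpos_of_nonneg_of_nonpos ht2 hc
    nlinarith [mul_pos hm hm, sq_nonneg w]
  have h4R : 0 < 4*R^2 - l2 := by
    by_contra hc
    push_neg at hc
    nlinarith [mul_pos hm hm, sq_nonneg d, sq_nonneg m]
  have hang' : l2*d^2 < (4*R^2 - l2)*m^2 := by nlinarith [hang'']
  have hmstpos : 0 < mst^2 := by nlinarith [hmst2, mul_pos hl2pos h4R]
  have h7 : (l2*d)^2 < (2*m*mst)^2 := by
    have h8 := mul_lt_mul_of_pos_left hang' hl2pos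
    nlinarith [h8, hmst2, sq_nonneg m]
  have habs : l2*d*mst < 2*m*mst^2 := by
    by_contra hc
    push_neg at hc
    have hpos0 : 0 < 2*m*mst^2 := by positivity
    have hpos1 : 0 < l2*d*mst := lt_of_lt_of_le hpos0 hc
    have hsq2 : (2*m*mst^2)*(2*m*mst^2) ≤ (l2*d*mst)*(l2*d*mst) :=
      mul_le_mul hc hc (by positivity) hpos1.le
    nlinarith [mul_lt_mul_of_pos_right h7 hmstpos, hsq2]
  have f7 : Pw*mst < 0 := by
    have h12' : l2*(Pw*mst) = l2*d*mst - 2*m*mst^2 := by linear_combination mst * f1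
    have h12 : l2*(Pw*mst) < 0 := by rw [h12']; linarith [habs]
    by_contra hc
    push_neg at hc
    nlinarith [mul_nonneg hl2pos.le hc]
  have f10 : g*mst < 0 := by
    rw [f8]
    have := mul_pos hl2pos hk
    linarith
  have f11 : (u*g)*mst < 0 := by
    have := mul_neg_of_pos_of_neg hu f10
    nlinarith [this]
  constructor
  · by_contra hc
    push_neg at hc
    have h13 := mul_pos_of_neg_of_neg f11 f7
    have h14 : (u*g) * Pw * mst^2 ≤ 0 :=
      mul_nonpos_of_nonpos_of_nonneg hc (sq_nonneg mst)
    nlinarith [h13, h14]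
  · intro hz
    rw [hz, zero_mul] at f10
    exact lt_irrefl 0 f10

set_option maxHeartbeats 1000000 in
/-- The main real-variable inequality. -/
private lemma stmt9Key (a0 b0 ak bk a1 b1 X Y R : ℝ) (hR : 0 < R)
    (H1 : (a0 - X)^2 + (b0 - Y)^2 = R^2)
    (H2 : (ak - X)^2 + (bk - Y)^2 = R^2)
    (H3 : R^2 + 1 = X^2 + Y^2)
    (hd0 : a0^2 + b0^2 < 1) (hdk : ak^2 + bk^2 < 1)
    (hm : 0 < (b1 - b0)*(ak - a0) - (a1 - a0)*(bk - b0))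
    (hang : ((a0-a1)*(ak-a1) + (b0-b1)*(bk-b1))^2 * (2*(R*R)) <
      (R*R + ((a0-X)*(ak-X) + (b0-Y)*(bk-Y))) *
        (((a0-a1)^2 + (b0-b1)^2) * ((ak-a1)^2 + (bk-b1)^2))) :
    0 < ((1 - a0^2 - b0^2)*(a0*bk - b0*ak)) * (a1^2 + b1^2 + 1 - 2*(a1*X + b1*Y)) ∧
      a0*bk - b0*ak ≠ 0 := by
  have hang'' : ((a0-a1)*(ak-a1) + (b0-b1)*(bk-b1))^2 * (2*(R*R)) <
      (2*R^2 - ((ak - a0)^2 + (bk - b0)^2)/2) *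
        (((a0-a1)*(ak-a1) + (b0-b1)*(bk-b1))^2
          + ((b1 - b0)*(ak - a0) - (a1 - a0)*(bk - b0))^2) := by
    have hEl : R*R + ((a0-X)*(ak-X) + (b0-Y)*(bk-Y)) =
        2*R^2 - ((ak - a0)^2 + (bk - b0)^2)/2 := by linear_combination (H1 + H2)/2
    have hlag : ((a0-a1)^2 + (b0-b1)^2) * ((ak-a1)^2 + (bk-b1)^2) =
        ((a0-a1)*(ak-a1) + (b0-b1)*(bk-b1))^2
          + ((b1 - b0)*(ak - a0) - (a1 - a0)*(bk - b0))^2 := by ring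
    calc ((a0-a1)*(ak-a1) + (b0-b1)*(bk-b1))^2 * (2*(R*R))
        < (R*R + ((a0-X)*(ak-X) + (b0-Y)*(bk-Y))) *
          (((a0-a1)^2 + (b0-b1)^2) * ((ak-a1)^2 + (bk-b1)^2)) := hang
      _ = _ := by rw [hEl, hlag]
  have hcs : ((b1-b0)^2 + (a1-a0)^2) * ((ak - a0)^2 + (bk - b0)^2) =
      ((b1 - b0)*(ak - a0) - (a1 - a0)*(bk - b0))^2
        + ((b1-b0)*(bk-b0) + (a1-a0)*(ak-a0))^2 := by ring
  have ht2 : (0:ℝ) ≤ (b1-b0)^2 + (a1-a0)^2 := by positivity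
  have hmst2 : 4*((Y - b0)*(ak - a0) - (X - a0)*(bk - b0))^2 =
      ((ak - a0)^2 + (bk - b0)^2)*(4*R^2 - ((ak - a0)^2 + (bk - b0)^2)) := by
    linear_combination (-2*bk*Y + 3*bk^2 - 2*ak*X + 3*ak^2 + 2*b0*Y - 4*b0*bk + b0^2 + 2*a0*X
        - 4*a0*ak + a0^2) * H1
      + (2*bk*Y + bk^2 + 2*ak*X + ak^2 - 2*b0*Y - 4*b0*bk + 3*b0^2 - 2*a0*X - 4*a0*ak
        + 3*a0^2) * H2
  have f1 : ((ak - a0)^2 + (bk - b0)^2)*((a1 - X)^2 + (b1 - Y)^2 - R^2) =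
      ((ak - a0)^2 + (bk - b0)^2)*((a0-a1)*(ak-a1) + (b0-b1)*(bk-b1))
        - 2*((b1 - b0)*(ak - a0) - (a1 - a0)*(bk - b0))
          *((Y - b0)*(ak - a0) - (X - a0)*(bk - b0)) := by
    linear_combination (-bk*b1 + bk^2 - ak*a1 + ak^2 + b0*b1 - b0*bk + a0*a1 - a0*ak) * H1
      + (bk*b1 + ak*a1 - b0*b1 - b0*bk + b0^2 - a0*a1 - a0*ak + a0^2) * H2
  have f8 : (a0*bk - b0*ak)*((Y - b0)*(ak - a0) - (X - a0)*(bk - b0)) =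
      -(((ak - a0)^2 + (bk - b0)^2)*(1 - a0*ak - b0*bk))/2 := by
    linear_combination ((bk^2 + ak^2 - b0*bk - a0*ak)/2) * H1
      + ((-b0*bk + b0^2 - a0*ak + a0^2)/2) * H2
      - ((-bk^2 - ak^2 + 2*b0*bk - b0^2 + 2*a0*ak - a0^2)/2) * H3
  have f9 : 0 < 1 - a0*ak - b0*bk := unit_disc_inner a0 b0 ak bk hd0 hdk
  have hu : 0 < 1 - a0^2 - b0^2 := by linarith
  have f12 : a1^2 + b1^2 + 1 - 2*(a1*X + b1*Y) = (a1 - X)^2 + (b1 - Y)^2 - R^2 := by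
    linear_combination H3
  obtain ⟨hpos, hne⟩ := stmt9Aux R ((ak - a0)^2 + (bk - b0)^2)
    ((a0-a1)*(ak-a1) + (b0-b1)*(bk-b1))
    ((b1 - b0)*(ak - a0) - (a1 - a0)*(bk - b0))
    ((Y - b0)*(ak - a0) - (X - a0)*(bk - b0))
    ((a1 - X)^2 + (b1 - Y)^2 - R^2)
    (a0*bk - b0*ak) (1 - a0^2 - b0^2) (1 - a0*ak - b0*bk)
    ((b1-b0)^2 + (a1-a0)^2) ((b1-b0)*(bk-b0) + (a1-a0)*(ak-a0))
    hR hm hu f9 hang'' hcs ht2 hmst2 f1 f8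
  refine ⟨?_, hne⟩
  rw [f12]
  exact hpos

set_option maxHeartbeats 2000000 in
theorem stmt9 (z0 zk zk1 zstar : ℂ) (R ε : ℝ) (hR : 0 < R)
    (hε : ε ∈ Set.Ioo 0 (π / 2))
    (hz0 : ‖z0‖ < 1) (hzk : ‖zk‖ < 1)
    (hzk1 : ‖zk1‖ < 1)
    (horth : R ^ 2 + 1 = ‖zstar‖ ^ 2)
    (hon0 : dist z0 zstar = R) (honk : dist zk zstar = R)
    (hangle1 : ε ≤ ∠ z0 zk1 zk) (hangle2 : ∠ z0 zk1 zk ≤ π - ε)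
    (hcentral : ∠ z0 zstar zk < 2 * ε) :
    (∠ z0 zstar zk) / 2 < ∠ z0 zk1 zk ∧
    ∠ z0 zk1 zk < π - (∠ z0 zstar zk) / 2 ∧
    (Complex.arg ((zk1 - z0) / (zk - z0)) ∈ Set.Ioo 0 π →
      Complex.arg (expInvDir z0 zk1 / expInvDir z0 zk) ∈ Set.Ioo 0 π) := by
  obtain ⟨hε0, hεpi⟩ := hε
  have hα0 : 0 ≤ ∠ z0 zstar zk := EuclideanGeometry.angle_nonneg _ _ _
  have hθpi : ∠ z0 zk1 zk ≤ π := EuclideanGeometry.angle_le_pi _ _ _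
  have hθ0 : 0 ≤ ∠ z0 zk1 zk := EuclideanGeometry.angle_nonneg _ _ _
  have P1 : (∠ z0 zstar zk) / 2 < ∠ z0 zk1 zk := by linarith
  have P2 : ∠ z0 zk1 zk < π - (∠ z0 zstar zk) / 2 := by linarith
  refine ⟨P1, P2, ?_⟩
  intro harg
  -- positive imaginary part of the Euclidean ratio
  have hw : 0 < ((zk1 - z0) / (zk - z0)).im := (arg_mem_Ioo_iff _).mp harg
  have hBne : zk - z0 ≠ 0 := by
    intro h
    rw [h, div_zero] at hw
    simp at hw
  have hns : 0 < Complex.normSq (zk - z0) := Complex.normSq_pos.mpr hBne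
  have hmR : 0 < (zk1.im - z0.im)*(zk.re - z0.re) - (zk1.re - z0.re)*(zk.im - z0.im) := by
    rw [Complex.div_im] at hw
    rw [div_sub_div_same] at hw
    have h2 := mul_pos hw hns
    rw [div_mul_cancel₀ _ (ne_of_gt hns)] at h2
    simp only [Complex.sub_re, Complex.sub_im] at h2
    linarith
  -- real coordinate hypotheses
  have H1 : (z0.re - zstar.re)^2 + (z0.im - zstar.im)^2 = R^2 := by
    have h := congrArg (fun t => t^2) hon0
    simp only [Complex.dist_eq, Complex.sq_norm, Complex.normSq_apply, Complex.sub_re,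
      Complex.sub_im] at h
    linear_combination h
  have H2 : (zk.re - zstar.re)^2 + (zk.im - zstar.im)^2 = R^2 := by
    have h := congrArg (fun t => t^2) honk
    simp only [Complex.dist_eq, Complex.sq_norm, Complex.normSq_apply, Complex.sub_re,
      Complex.sub_im] at h
    linear_combination h
  have H3 : R^2 + 1 = zstar.re^2 + zstar.im^2 := by
    have h := horth
    rw [Complex.sq_norm, Complex.normSq_apply] at h
    linear_combination h
  have hz0sq : z0.re^2 + z0.im^2 < 1 := by
    have h : ‖z0‖ ^ 2 < 1 := by nlinarith [norm_nonneg z0]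
    rw [Complex.sq_norm, Complex.normSq_apply] at h
    linarith [h]
  have hzksq : zk.re^2 + zk.im^2 < 1 := by
    have h : ‖zk‖ ^ 2 < 1 := by nlinarith [norm_nonneg zk]
    rw [Complex.sq_norm, Complex.normSq_apply] at h
    linarith [h]
  have hzk1sq : zk1.re^2 + zk1.im^2 < 1 := by
    have h : ‖zk1‖ ^ 2 < 1 := by nlinarith [norm_nonneg zk1]
    rw [Complex.sq_norm, Complex.normSq_apply] at h
    linarith [h]
  -- nonvanishing of the Möbius denominators
  have habs1 : ‖(starRingEnd ℂ) z0 * zk1‖ < 1 := by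
    rw [norm_mul, Complex.norm_conj]
    nlinarith [norm_nonneg z0, norm_nonneg zk1]
  have habsk : ‖(starRingEnd ℂ) z0 * zk‖ < 1 := by
    rw [norm_mul, Complex.norm_conj]
    nlinarith [norm_nonneg z0, norm_nonneg zk]
  have hden1 : (1 : ℂ) - (starRingEnd ℂ) z0 * zk1 ≠ 0 := by
    intro h
    have h1 : (1 : ℂ) = (starRingEnd ℂ) z0 * zk1 := by
      have := sub_eq_zero.mp h; exact this
    have h2 := congrArg (‖·‖) h1
    rw [norm_one] at h2
    linarith [habs1, h2.ge]
  have hdenk : (1 : ℂ) - (starRingEnd ℂ) z0 * zk ≠ 0 := by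
    intro h
    have h1 : (1 : ℂ) = (starRingEnd ℂ) z0 * zk := by
      have := sub_eq_zero.mp h; exact this
    have h2 := congrArg (‖·‖) h1
    rw [norm_one] at h2
    linarith [habsk, h2.ge]
  -- the cosine inequalities
  have hc1 : Real.cos (∠ z0 zk1 zk) < Real.cos ((∠ z0 zstar zk)/2) :=
    Real.cos_lt_cos_of_nonneg_of_le_pi (by linarith) hθpi P1
  have hc2 : Real.cos (π - (∠ z0 zstar zk)/2) < Real.cos (∠ z0 zk1 zk) :=
    Real.cos_lt_cos_of_nonneg_of_le_pi hθ0 (by linarith) P2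
  rw [Real.cos_pi_sub] at hc2
  have hsq : Real.cos (∠ z0 zk1 zk)^2 < Real.cos ((∠ z0 zstar zk)/2)^2 :=
    sq_lt_sq' (by linarith) hc1
  have hhalf : Real.cos ((∠ z0 zstar zk)/2)^2 = 1/2 + Real.cos (∠ z0 zstar zk)/2 := by
    have h2 : 2*((∠ z0 zstar zk)/2) = ∠ z0 zstar zk := by ring
    rw [Real.cos_sq, h2]
  -- cosine of the central angle
  have hcosα : Real.cos (∠ z0 zstar zk) =
      ((z0.re - zstar.re)*(zk.re - zstar.re) + (z0.im - zstar.im)*(zk.im - zstar.im)) / (R*R) := by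
    unfold EuclideanGeometry.angle
    rw [InnerProductGeometry.cos_angle]
    rw [vsub_eq_sub, vsub_eq_sub]
    rw [show ‖z0 - zstar‖ = R from by rw [← dist_eq_norm]; exact hon0]
    rw [show ‖zk - zstar‖ = R from by rw [← dist_eq_norm]; exact honk]
    congr 1
    rw [Complex.inner]
    simp only [map_sub, Complex.mul_re, Complex.sub_re, Complex.sub_im, Complex.conj_re,
      Complex.conj_im]
    ring
  -- cosine of the angle at zk1
  have hcosθ : Real.cos (∠ z0 zk1 zk) =
      ((z0.re - zk1.re)*(zk.re - zk1.re) + (z0.im - zk1.im)*(zk.im - zk1.im))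
        / (‖z0 - zk1‖ * ‖zk - zk1‖) := by
    unfold EuclideanGeometry.angle
    rw [InnerProductGeometry.cos_angle]
    rw [vsub_eq_sub, vsub_eq_sub]
    congr 1
    rw [Complex.inner]
    simp only [map_sub, Complex.mul_re, Complex.sub_re, Complex.sub_im, Complex.conj_re,
      Complex.conj_im]
    ring
  obtain ⟨hz10, hz1k⟩ := abs_im_pos_ne_left z0 zk zk1 hmR
  have hnu : ‖z0 - zk1‖^2 = (z0.re - zk1.re)^2 + (z0.im - zk1.im)^2 := by
    rw [Complex.sq_norm, Complex.normSq_apply]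
    simp only [Complex.sub_re, Complex.sub_im]
    ring
  have hnv : ‖zk - zk1‖^2 = (zk.re - zk1.re)^2 + (zk.im - zk1.im)^2 := by
    rw [Complex.sq_norm, Complex.normSq_apply]
    simp only [Complex.sub_re, Complex.sub_im]
    ring
  have hnupos : 0 < (z0.re - zk1.re)^2 + (z0.im - zk1.im)^2 := by
    rw [← hnu]
    have h : z0 - zk1 ≠ 0 := sub_ne_zero.mpr (fun h => hz10 h.symm)
    exact pow_pos (norm_pos_iff.mpr h) 2
  have hnvpos : 0 < (zk.re - zk1.re)^2 + (zk.im - zk1.im)^2 := by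
    rw [← hnv]
    have h : zk - zk1 ≠ 0 := sub_ne_zero.mpr (fun h => hz1k h.symm)
    exact pow_pos (norm_pos_iff.mpr h) 2
  -- assemble the polynomial angle inequality
  have hang2 : ((z0.re - zk1.re)*(zk.re - zk1.re) + (z0.im - zk1.im)*(zk.im - zk1.im))^2
        * (2*(R*R)) <
      (R*R + ((z0.re - zstar.re)*(zk.re - zstar.re) + (z0.im - zstar.im)*(zk.im - zstar.im))) *
        (((z0.re - zk1.re)^2 + (z0.im - zk1.im)^2) *
          ((zk.re - zk1.re)^2 + (zk.im - zk1.im)^2)) := by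
    rw [hcosθ, hhalf, hcosα] at hsq
    rw [div_pow, mul_pow, hnu, hnv] at hsq
    have hnuv : 0 < ((z0.re - zk1.re)^2 + (z0.im - zk1.im)^2) *
        ((zk.re - zk1.re)^2 + (zk.im - zk1.im)^2) := mul_pos hnupos hnvpos
    rw [div_lt_iff₀ hnuv] at hsq
    have hRR : (0:ℝ) < 2*(R*R) := by positivity
    have h15 := mul_lt_mul_of_pos_right hsq hRR
    have h16 : (1/2 + ((z0.re - zstar.re)*(zk.re - zstar.re)
          + (z0.im - zstar.im)*(zk.im - zstar.im)) / (R*R) / 2) *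
        (((z0.re - zk1.re)^2 + (z0.im - zk1.im)^2) *
          ((zk.re - zk1.re)^2 + (zk.im - zk1.im)^2)) * (2*(R*R)) =
        (R*R + ((z0.re - zstar.re)*(zk.re - zstar.re)
          + (z0.im - zstar.im)*(zk.im - zstar.im))) *
        (((z0.re - zk1.re)^2 + (z0.im - zk1.im)^2) *
          ((zk.re - zk1.re)^2 + (zk.im - zk1.im)^2)) := by
      have hRRne : (R*R) ≠ 0 := by positivity
      field_simp
    rw [h16] at h15
    exact h15
  -- apply the key real lemma
  obtain ⟨hpos, hdet⟩ := stmt9Key z0.re z0.im zk.re zk.im zk1.re zk1.im zstar.re zstar.im R hR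
    H1 H2 H3 hz0sq hzksq hmR hang2
  -- vanishing of the auxiliary linear form
  have E0 : (zk.re - 2*z0.im*zk.re*zstar.im + z0.im^2*zk.re - z0.re + 2*z0.re*zk.im*zstar.im
        - z0.re*zk.im^2 - z0.re*zk.re^2 + z0.re^2*zk.re) * z0.im +
      (-zk.im + z0.im + z0.im*zk.im^2 - 2*z0.im*zk.re*zstar.re + z0.im*zk.re^2 - z0.im^2*zk.im
        + 2*z0.re*zk.im*zstar.re - z0.re^2*zk.im) * z0.re = 0 := by
    linear_combination (z0.im*zk.re - z0.re*zk.im) * H1 + (z0.im*zk.re - z0.re*zk.im) * H3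
  have Ek : (zk.re - 2*z0.im*zk.re*zstar.im + z0.im^2*zk.re - z0.re + 2*z0.re*zk.im*zstar.im
        - z0.re*zk.im^2 - z0.re*zk.re^2 + z0.re^2*zk.re) * zk.im +
      (-zk.im + z0.im + z0.im*zk.im^2 - 2*z0.im*zk.re*zstar.re + z0.im*zk.re^2 - z0.im^2*zk.im
        + 2*z0.re*zk.im*zstar.re - z0.re^2*zk.im) * zk.re = 0 := by
    linear_combination (z0.im*zk.re - z0.re*zk.im) * H2 + (z0.im*zk.re - z0.re*zk.im) * H3
  have hbre : (zk.re - 2*z0.im*zk.re*zstar.im + z0.im^2*zk.re - z0.re + 2*z0.re*zk.im*zstar.im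
      - z0.re*zk.im^2 - z0.re*zk.re^2 + z0.re^2*zk.re) = 0 := by
    have h17 : (zk.re - 2*z0.im*zk.re*zstar.im + z0.im^2*zk.re - z0.re + 2*z0.re*zk.im*zstar.im
        - z0.re*zk.im^2 - z0.re*zk.re^2 + z0.re^2*zk.re) * (z0.re*zk.im - z0.im*zk.re) = 0 := by
      linear_combination z0.re * Ek - zk.re * E0
    rcases mul_eq_zero.mp h17 with h | h
    · exact h
    · exact absurd h hdet
  have hbim : (-zk.im + z0.im + z0.im*zk.im^2 - 2*z0.im*zk.re*zstar.re + z0.im*zk.re^2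
      - z0.im^2*zk.im + 2*z0.re*zk.im*zstar.re - z0.re^2*zk.im) = 0 := by
    have h18 : (-zk.im + z0.im + z0.im*zk.im^2 - 2*z0.im*zk.re*zstar.re + z0.im*zk.re^2
        - z0.im^2*zk.im + 2*z0.re*zk.im*zstar.re - z0.re^2*zk.im) *
        (z0.re*zk.im - z0.im*zk.re) = 0 := by
      linear_combination zk.im * E0 - z0.im * Ek
    rcases mul_eq_zero.mp h18 with h | h
    · exact h
    · exact absurd h hdet
  -- rewrite the hyperbolic ratio as a single fraction
  have hquot : expInvDir z0 zk1 / expInvDir z0 zk =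
      ((zk1 - z0) * (1 - (starRingEnd ℂ) z0 * zk)) /
        ((zk - z0) * (1 - (starRingEnd ℂ) z0 * zk1)) := by
    unfold expInvDir
    rw [div_div_div_comm, div_div_eq_mul_div, div_mul_eq_mul_div, div_div]
  rw [hquot, arg_mem_Ioo_iff]
  -- positivity of the imaginary part
  set A := (zk1 - z0) * (1 - (starRingEnd ℂ) z0 * zk) with hAdef
  set B := (zk - z0) * ((1 : ℂ) - (starRingEnd ℂ) z0 * zk1) with hBdef
  have hBne' : B ≠ 0 := mul_ne_zero hBne hden1
  have hnsB : 0 < Complex.normSq B := Complex.normSq_pos.mpr hBne'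
  rw [Complex.div_im, div_sub_div_same]
  apply div_pos _ hnsB
  -- the grand identity
  have hgrand : A.im * B.re - A.re * B.im =
      (1 - z0.re^2 - z0.im^2) *
        ((z0.re*zk.im - z0.im*zk.re) *
          (zk1.re^2 + zk1.im^2 + 1 - 2*(zk1.re*zstar.re + zk1.im*zstar.im))
        + (zk.re - 2*z0.im*zk.re*zstar.im + z0.im^2*zk.re - z0.re + 2*z0.re*zk.im*zstar.im
            - z0.re*zk.im^2 - z0.re*zk.re^2 + z0.re^2*zk.re) * zk1.im
        + (-zk.im + z0.im + z0.im*zk.im^2 - 2*z0.im*zk.re*zstar.re + z0.im*zk.re^2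
            - z0.im^2*zk.im + 2*z0.re*zk.im*zstar.re - z0.re^2*zk.im) * zk1.re) := by
    rw [hAdef, hBdef]
    simp only [Complex.mul_re, Complex.mul_im, Complex.sub_re, Complex.sub_im, Complex.one_re,
      Complex.one_im, Complex.conj_re, Complex.conj_im]
    ring
  rw [hgrand, hbre, hbim]
  have hfin : (1 - z0.re^2 - z0.im^2) *
      ((z0.re*zk.im - z0.im*zk.re) *
        (zk1.re^2 + zk1.im^2 + 1 - 2*(zk1.re*zstar.re + zk1.im*zstar.im)) + 0 * zk1.im
        + 0 * zk1.re) =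
      ((1 - z0.re^2 - z0.im^2)*(z0.re*zk.im - z0.im*zk.re)) *
        (zk1.re^2 + zk1.im^2 + 1 - 2*(zk1.re*zstar.re + zk1.im*zstar.im)) := by ring
  rw [hfin]
  exact hpos
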